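/- arXiv:2208.10428 — 2 statements merged into one kernel-verified Lean document; each statement's English description precedes it below -/
import Mathlib

section
/- For each equivalence class μ of [n]^{k+l} under entrywise permutation equivalence, the linear map L_μ : (ℝ^d)^{[n]^k} → (ℝ^{d'})^{[n]^l} defined by L_μ(A)_j = Σ_i 1[(i,j) ∈ μ] · A_i · w for a fixed matrix w ∈ ℝ^{d×d'} is permutation equivariant: L_μ(π · A) = π · L_μ(A) for all π ∈ S_n. -/
/-- For an equivalence class `μ` of `[n]^k × [n]^l` (concatenated multi-indices
in `[n]^{k+l}`) under simultaneous entrywise permutation (i.e. `μ` is invariant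
under the diagonal `S_n` action), the linear map
`L_μ(A)_j = Σ_i 1[(i,j) ∈ μ] · A_i · w` is permutation equivariant. -/
theorem equivalence_class_linear_map_equivariant (n k l d d' : ℕ)
    (hn : 0 < n) (hk : 0 < k) (hl : 0 < l) (hd : 0 < d) (hd' : 0 < d')
    (μ : Set ((Fin k → Fin n) × (Fin l → Fin n)))
    (hμ : ∀ (π : Equiv.Perm (Fin n)) (i : Fin k → Fin n) (j : Fin l → Fin n),
      (i, j) ∈ μ ↔ ((fun a => π (i a)), (fun a => π (j a))) ∈ μ)
    (w : Matrix (Fin d) (Fin d') ℝ)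
    [DecidablePred (· ∈ μ)] :
    ∀ (π : Equiv.Perm (Fin n)) (A : (Fin k → Fin n) → Fin d → ℝ)
      (j : Fin l → Fin n),
      (∑ i : Fin k → Fin n,
          if (i, j) ∈ μ then Matrix.vecMul (A (fun a => π⁻¹ (i a))) w else 0) =
        ∑ i : Fin k → Fin n,
          if (i, fun a => π⁻¹ (j a)) ∈ μ then Matrix.vecMul (A i) w else 0 := by
  intro π A j
  refine (Fintype.sum_equiv (Equiv.arrowCongr (Equiv.refl (Fin k)) π) _ _ ?_).symm
  intro i
  have h := hμ π i (fun a => π⁻¹ (j a))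
  simp only [Equiv.arrowCongr_apply, Equiv.refl_symm, Equiv.coe_refl,
    Function.comp] at *
  simp only [Equiv.Perm.inv_def, Equiv.apply_symm_apply] at h
  simp [Equiv.arrowCongr, h, Equiv.symm_apply_apply, Function.comp_def]
end

section
/- Let L(A)_j = Σ_{I=1}^{min(k,l)} Σ_{i ∈ [n]^k} 1[|set(i) ∩ set(j)| = I] · A_i · w_I + Σ_{i ∈ [n]^k} A_i · w_0 + b for j ∈ [n]^l, applied only at injective j (otherwise output 0). Then L is permutation equivariant: for every π ∈ S_n and every tensor A : [n]^k → ℝ^d, L(π · A) = π · L(A). -/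
open Finset

/-- The equivariant linear layer for uniform hypergraphs:
`L(A)_j = 1[j injective] · (Σ_{I=1}^{min(k,l)} Σ_i 1[|set(i)∩set(j)|=I] A_i w_I
+ Σ_i A_i w_0 + b)`. -/
noncomputable def L (n k l d d' : ℕ) (w : ℕ → Matrix (Fin d) (Fin d') ℝ)
    (b : Fin d' → ℝ) (A : (Fin k → Fin n) → Fin d → ℝ)
    (j : Fin l → Fin n) : Fin d' → ℝ :=
  if Function.Injective j then
    (∑ I ∈ Finset.Icc 1 (min k l), ∑ i : Fin k → Fin n,
      if (Finset.image i Finset.univ ∩ Finset.image j Finset.univ).card = I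
        then Matrix.vecMul (A i) (w I) else 0)
    + (∑ i : Fin k → Fin n, Matrix.vecMul (A i) (w 0)) + b
  else 0

/-- The layer `L` is permutation equivariant: `L(π·A) = π·L(A)`. -/
theorem L_equivariant (n k l d d' : ℕ) (hn : 0 < n) (hk : 0 < k) (hl : 0 < l)
    (hd : 0 < d) (hd' : 0 < d') (w : ℕ → Matrix (Fin d) (Fin d') ℝ)
    (b : Fin d' → ℝ) :
    ∀ (π : Equiv.Perm (Fin n)) (A : (Fin k → Fin n) → Fin d → ℝ)
      (j : Fin l → Fin n),
      L n k l d d' w b (fun i => A (fun a => π⁻¹ (i a))) j =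
        L n k l d d' w b A (fun a => π⁻¹ (j a)) := by
  intro π A j
  have hinj : Function.Injective (fun a => π⁻¹ (j a)) ↔ Function.Injective j := by
    constructor
    · intro h x y hxy
      exact h (by simp [hxy])
    · intro h x y hxy
      exact h (π⁻¹.injective hxy)
  have key : ∀ S T : Finset (Fin n),
      (S.image ⇑π⁻¹ ∩ T.image ⇑π⁻¹).card = (S ∩ T).card := by
    intro S T
    rw [← Finset.image_inter _ _ π⁻¹.injective,
      Finset.card_image_of_injective _ π⁻¹.injective]
  set e : (Fin k → Fin n) ≃ (Fin k → Fin n) := Equiv.piCongrRight fun _ => π⁻¹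
    with he
  have hA : ∀ i : Fin k → Fin n, e i = fun a => π⁻¹ (i a) := by
    intro i; funext a; simp [he]
  have h2 : ∑ i : Fin k → Fin n, Matrix.vecMul (A fun a => π⁻¹ (i a)) (w 0)
      = ∑ i : Fin k → Fin n, Matrix.vecMul (A i) (w 0) := by
    refine Fintype.sum_equiv e _ _ fun i => ?_
    rw [hA i]
  have h1 : ∀ I : ℕ, (∑ i : Fin k → Fin n,
      if (Finset.image i Finset.univ ∩ Finset.image j Finset.univ).card = I
        then Matrix.vecMul (A fun a => π⁻¹ (i a)) (w I) else 0)
      = ∑ i : Fin k → Fin n,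
      if (Finset.image i Finset.univ ∩
          Finset.image (fun a => π⁻¹ (j a)) Finset.univ).card = I
        then Matrix.vecMul (A i) (w I) else 0 := by
    intro I
    refine Fintype.sum_equiv e _ _ fun i => ?_
    rw [hA i]
    have e1 : Finset.image (fun a => π⁻¹ (i a)) Finset.univ
        = (Finset.image i Finset.univ).image ⇑π⁻¹ := by
      rw [Finset.image_image]; rfl
    have e2 : Finset.image (fun a => π⁻¹ (j a)) Finset.univ
        = (Finset.image j Finset.univ).image ⇑π⁻¹ := by
      rw [Finset.image_image]; rfl
    rw [e1, e2, key]
  unfold L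
  by_cases hj : Function.Injective j
  · rw [if_pos hj, if_pos (hinj.mpr hj), h2,
      Finset.sum_congr rfl fun I _ => h1 I]
  · rw [if_neg hj, if_neg (fun h => hj (hinj.mp h))]
end
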